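/- For every integer n > 4 and every subset G of the vertex set of the shift graph Sh_n^4, the independence number of the induced subgraph satisfies α(Sh_n^4[G]) ≥ (3/8)·|G|. -/

import Mathlib

/-- `y` is the "shift" of `x`: `x_i = y_{i+1}` for all `i ∈ {1,…,k-1}`. -/
def shiftRel (k : ℕ) (x y : Fin k → ℕ) : Prop :=
  ∀ i j : Fin k, (j : ℕ) = (i : ℕ) + 1 → x i = y j

/-- Adjacency in the shift graph `Sh_n^k`. -/
def shAdjK (k : ℕ) (x y : Fin k → ℕ) : Prop :=
  x ≠ y ∧ (shiftRel k x y ∨ shiftRel k y x)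

/-- `x` is a vertex of `Sh_n^k`: an increasing `k`-tuple with entries in `{1,…,n}`. -/
def isVertK (n k : ℕ) (x : Fin k → ℕ) : Prop :=
  StrictMono x ∧ ∀ i, 1 ≤ x i ∧ x i ≤ n

open Classical in
/-- The independence number of the subgraph of `Sh_n^k` induced on `G`. -/
noncomputable def indepNumK (k : ℕ) (G : Finset (Fin k → ℕ)) : ℕ :=
  (G.powerset.filter fun I => ∀ x ∈ I, ∀ y ∈ I, ¬ shAdjK k x y).sup Finset.card

/-- `α_n^k`: the minimum of `α(Sh_n^k[G])/|G|` over nonempty `G ⊆ V(Sh_n^k)`. -/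
noncomputable def alphaNK (n k : ℕ) : ℝ :=
  sInf {r : ℝ | ∃ G : Finset (Fin k → ℕ), G.Nonempty ∧ (∀ x ∈ G, isVertK n k x) ∧
    r = (indepNumK k G : ℝ) / G.card}

/-- A set `A ⊆ Bool³` realizing a maximum directed cut of the de Bruijn graph `B(2,3)`. -/
def AA : Bool → Bool → Bool → Bool
  | false, false, false => true
  | false, true, _ => true
  | true, true, false => true
  | _, _, _ => false

/-- The pattern set `P`: tail in `A`, init not in `A`. Its density in `Bool⁴` is `6/16 = 3/8`. -/
def inP (w : Fin 4 → Bool) : Bool :=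
  AA (w 1) (w 2) (w 3) && !(AA (w 0) (w 1) (w 2))

lemma card_inP : (Finset.univ.filter fun w : Fin 4 → Bool => inP w = true).card = 6 := by
  decide

/-- The bit pattern of a vertex `x` under the coloring (set) `S`. -/
def pat (S : Finset ℕ) (x : Fin 4 → ℕ) : Fin 4 → Bool := fun j => decide (x j ∈ S)

/-- Key counting lemma: each vertex is "good" for at least `6·2^(n-3)` colorings. -/
lemma count_ge (n : ℕ) (hn : 4 < n) (x : Fin 4 → ℕ) (hmono : StrictMono x)
    (hle : ∀ i, x i ≤ n) :
    6 * 2 ^ (n - 3) ≤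
      (((Finset.range (n+1)).powerset).filter fun S => inP (pat S x) = true).card := by
  classical
  set img : Finset ℕ := Finset.image x Finset.univ with himg_def
  have hinj : Function.Injective x := hmono.injective
  have himgcard : img.card = 4 := by
    rw [himg_def, Finset.card_image_of_injective _ hinj, Finset.card_univ, Fintype.card_fin]
  have hsub : img ⊆ Finset.range (n+1) := by
    intro m hm
    simp only [himg_def, Finset.mem_image] at hm
    obtain ⟨i, -, rfl⟩ := hm
    exact Finset.mem_range.2 (Nat.lt_succ_of_le (hle i))
  set D : Finset ((Fin 4 → Bool) × Finset ℕ) :=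
    (Finset.univ.filter fun w : Fin 4 → Bool => inP w = true) ×ˢ
      ((Finset.range (n+1)) \ img).powerset with hD_def
  have hDcard : D.card = 6 * 2 ^ (n - 3) := by
    have h4 : n + 1 - 4 = n - 3 := by omega
    rw [hD_def, Finset.card_product, card_inP, Finset.card_powerset,
      Finset.card_sdiff_of_subset hsub, Finset.card_range, himgcard, h4]
  -- the injection
  set f : (Fin 4 → Bool) × Finset ℕ → Finset ℕ :=
    fun p => p.2 ∪ (Finset.univ.filter fun j => p.1 j = true).image x with hf_def
  have hmem_pat : ∀ w : Fin 4 → Bool, ∀ T : Finset ℕ, T ⊆ (Finset.range (n+1)) \ img →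
      ∀ j, (x j ∈ f (w, T)) ↔ w j = true := by
    intro w T hT j
    have hxj : x j ∈ img := Finset.mem_image.2 ⟨j, Finset.mem_univ _, rfl⟩
    have hxT : x j ∉ T := fun h => (Finset.mem_sdiff.1 (hT h)).2 hxj
    simp only [hf_def, Finset.mem_union, Finset.mem_image, Finset.mem_filter,
      Finset.mem_univ, true_and]
    constructor
    · rintro (h | ⟨i, hi, hxi⟩)
      · exact absurd h hxT
      · rwa [hinj hxi] at hi
    · intro h
      exact Or.inr ⟨j, h, rfl⟩
  have hpat : ∀ w : Fin 4 → Bool, ∀ T : Finset ℕ, T ⊆ (Finset.range (n+1)) \ img →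
      pat (f (w, T)) x = w := by
    intro w T hT
    funext j
    have hiff := hmem_pat w T hT j
    simp only [pat]
    cases h : w j
    · simp only [h, Bool.false_eq_true, iff_false] at hiff
      exact decide_eq_false hiff
    · simp only [h, iff_true] at hiff
      exact decide_eq_true hiff
  apply hDcard ▸ Finset.card_le_card_of_injOn f ?_ ?_
  · -- maps into the filter
    rintro ⟨w, T⟩ hp
    rw [hD_def, Finset.mem_coe, Finset.mem_product, Finset.mem_filter, Finset.mem_powerset] at hp
    obtain ⟨⟨-, hw⟩, hT⟩ := hp
    rw [Finset.mem_coe, Finset.mem_filter, Finset.mem_powerset]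
    constructor
    · intro m hm
      rw [hf_def] at hm
      rcases Finset.mem_union.1 hm with h | h
      · exact (Finset.mem_sdiff.1 (hT h)).1
      · obtain ⟨i, -, rfl⟩ := Finset.mem_image.1 h
        exact hsub (Finset.mem_image.2 ⟨i, Finset.mem_univ _, rfl⟩)
    · rw [hpat w T hT]; exact hw
  · -- injectivity
    rintro ⟨w, T⟩ hp ⟨w', T'⟩ hp' heq
    simp only [Finset.mem_coe, hD_def, Finset.mem_product, Finset.mem_filter, Finset.mem_univ,
      true_and, Finset.mem_powerset] at hp hp'
    have hw : w = w' := by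
      rw [← hpat w T hp.2, ← hpat w' T' hp'.2, heq]
    
    have hTdisj : ∀ (T₀ : Finset ℕ), T₀ ⊆ (Finset.range (n+1)) \ img →
        ∀ w₀, (f (w₀, T₀)) \ img = T₀ := by
      intro T₀ hT₀ w₀
      ext m
      simp only [hf_def, Finset.mem_sdiff, Finset.mem_union]
      constructor
      · rintro ⟨h | h, hm⟩
        · exact h
        · obtain ⟨i, -, rfl⟩ := Finset.mem_image.1 h
          exact absurd (Finset.mem_image.2 ⟨i, Finset.mem_univ _, rfl⟩) hm
      · intro h
        exact ⟨Or.inl h, (Finset.mem_sdiff.1 (hT₀ h)).2⟩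
    have hT : T = T' := by
      rw [← hTdisj T hp.2 w, ← hTdisj T' hp'.2 w', heq]
    rw [Prod.mk.injEq]; exact ⟨hw, hT⟩

/-- For `n > 4`, every `G ⊆ V(Sh_n^4)` satisfies `α(Sh_n^4[G]) ≥ (3/8)·|G|`. -/
theorem indepNum4_ge (n : ℕ) (hn : 4 < n) (G : Finset (Fin 4 → ℕ))
    (hG : ∀ x ∈ G, isVertK n 4 x) :
    (3/8 : ℝ) * G.card ≤ (indepNumK 4 G : ℝ) := by
  classical
  set Ω := (Finset.range (n+1)).powerset with hΩ_def
  set g : Finset ℕ → ℕ := fun S => (G.filter fun x => inP (pat S x) = true).card with hg_def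
  -- double counting
  have hdouble : G.card * (6 * 2 ^ (n - 3)) ≤ ∑ S ∈ Ω, g S := by
    have hswap : ∑ S ∈ Ω, g S = ∑ x ∈ G, (Ω.filter fun S => inP (pat S x) = true).card := by
      simp only [hg_def, Finset.card_filter]
      rw [Finset.sum_comm]
    rw [hswap]
    calc G.card * (6 * 2 ^ (n - 3)) = ∑ _x ∈ G, 6 * 2 ^ (n - 3) := by
          rw [Finset.sum_const, smul_eq_mul]
      _ ≤ ∑ x ∈ G, (Ω.filter fun S => inP (pat S x) = true).card := by
          apply Finset.sum_le_sum
          intro x hx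
          obtain ⟨hmono, hb⟩ := hG x hx
          exact count_ge n hn x hmono (fun i => (hb i).2)
  -- pick the best coloring
  obtain ⟨S₀, hS₀Ω, hS₀max⟩ := Ω.exists_max_image g ⟨∅, by simp [hΩ_def]⟩
  have hsum_le : ∑ S ∈ Ω, g S ≤ 2 ^ (n + 1) * g S₀ := by
    calc ∑ S ∈ Ω, g S ≤ ∑ _S ∈ Ω, g S₀ := Finset.sum_le_sum fun S hS => hS₀max S hS
      _ = 2 ^ (n + 1) * g S₀ := by
          rw [Finset.sum_const, smul_eq_mul, hΩ_def, Finset.card_powerset, Finset.card_range]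
  -- arithmetic: 3·|G| ≤ 8·g S₀
  have hkey : 3 * G.card ≤ 8 * g S₀ := by
    have h1 : G.card * (6 * 2 ^ (n - 3)) ≤ 2 ^ (n + 1) * g S₀ := le_trans hdouble hsum_le
    have h2 : (2 : ℕ) ^ (n + 1) = 2 ^ (n - 3) * 16 := by
      have : n + 1 = (n - 3) + 4 := by omega
      rw [this, pow_add]; norm_num
    rw [h2] at h1
    have h3 : 2 ^ (n - 3) * (6 * G.card) ≤ 2 ^ (n - 3) * (16 * g S₀) := by
      calc 2 ^ (n - 3) * (6 * G.card) = G.card * (6 * 2 ^ (n - 3)) := by ring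
        _ ≤ 2 ^ (n - 3) * 16 * g S₀ := h1
        _ = 2 ^ (n - 3) * (16 * g S₀) := by ring
    have h4 := Nat.le_of_mul_le_mul_left h3 (Nat.pow_pos (by norm_num))
    omega
  -- the chosen set is independent
  set I : Finset (Fin 4 → ℕ) := G.filter fun x => inP (pat S₀ x) = true with hI_def
  have hIindep : ∀ x ∈ I, ∀ y ∈ I, ¬ shAdjK 4 x y := by
    intro x hx y hy hadj
    rw [hI_def, Finset.mem_filter] at hx hy
    obtain ⟨-, hxP⟩ := hx
    obtain ⟨-, hyP⟩ := hy
    obtain ⟨hne, hsh | hsh⟩ := hadj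
    · -- shiftRel x y : y = (y₀, x₀, x₁, x₂)
      have e1 : x 0 = y 1 := hsh 0 1 rfl
      have e2 : x 1 = y 2 := hsh 1 2 rfl
      have e3 : x 2 = y 3 := hsh 2 3 rfl
      simp only [inP, Bool.and_eq_true, Bool.not_eq_true'] at hxP hyP
      have : pat S₀ y 1 = pat S₀ x 0 := by simp [pat, e1]
      have h2' : pat S₀ y 2 = pat S₀ x 1 := by simp [pat, e2]
      have h3' : pat S₀ y 3 = pat S₀ x 2 := by simp [pat, e3]
      rw [this, h2', h3'] at hyP
      rw [hyP.1] at hxP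
      exact absurd hxP.2 (by simp)
    · have e1 : y 0 = x 1 := hsh 0 1 rfl
      have e2 : y 1 = x 2 := hsh 1 2 rfl
      have e3 : y 2 = x 3 := hsh 2 3 rfl
      simp only [inP, Bool.and_eq_true, Bool.not_eq_true'] at hxP hyP
      have h1' : pat S₀ x 1 = pat S₀ y 0 := by simp [pat, e1]
      have h2' : pat S₀ x 2 = pat S₀ y 1 := by simp [pat, e2]
      have h3' : pat S₀ x 3 = pat S₀ y 2 := by simp [pat, e3]
      rw [h1', h2', h3'] at hxP
      rw [hxP.1] at hyP
      exact absurd hyP.2 (by simp)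
  -- hence indepNumK ≥ |I|
  have hIle : I.card ≤ indepNumK 4 G := by
    unfold indepNumK
    apply Finset.le_sup (f := Finset.card)
    simp only [Finset.mem_filter, Finset.mem_powerset]
    exact ⟨Finset.filter_subset _ _, hIindep⟩
  have hfinal : 3 * G.card ≤ 8 * indepNumK 4 G := by
    calc 3 * G.card ≤ 8 * g S₀ := hkey
      _ = 8 * I.card := rfl
      _ ≤ 8 * indepNumK 4 G := by omega
  have : (3 : ℝ) * G.card ≤ 8 * indepNumK 4 G := by exact_mod_cast hfinal
  linarith
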